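/- Let k ≥ 2 and let g : ℤ → ℝ² be the 2k-periodic sequence with g_n = f_n for 1 ≤ n ≤ k and g_n = −f_{n−k} for k+1 ≤ n ≤ 2k, where f₁,…,f_k are unit vectors in ℝ² ordered counterclockwise with all consecutive angles positive and total angle < π. Then for each i, the set {g_i, g_{i+1}, …, g_{i+k−1}} is a frame equivalent to {f₁,…,f_k}, and its cross angle equals π minus the angle between g_{i+k−1} and g_{i+k}. -/

import Mathlib

open Real

/-- Two frames are equivalent when one is obtained from the other by a
composition of a common orthogonal transformation of `ℝ²`, a permutation of the
indices, and sign changes of individual vectors. -/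
def FrameEquiv {k : ℕ} (f g : Fin k → EuclideanSpace ℝ (Fin 2)) : Prop :=
  ∃ (U : EuclideanSpace ℝ (Fin 2) ≃ₗᵢ[ℝ] EuclideanSpace ℝ (Fin 2))
    (σ : Equiv.Perm (Fin k)) (ε : Fin k → ℝ),
      (∀ i, ε i = 1 ∨ ε i = -1) ∧ ∀ i, g i = ε i • U (f (σ i))

/-- The unit vector in `ℝ²` at angle `t`. -/
noncomputable def vec2 (t : ℝ) : EuclideanSpace ℝ (Fin 2) :=
  (WithLp.equiv 2 (Fin 2 → ℝ)).symm ![Real.cos t, Real.sin t]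

/-- `A` is a cross angle of the frame `f` if some equivalent frame `g` can be
listed counterclockwise (strictly increasing angles) with total opening
`A < π`. -/
def CrossAngles {m : ℕ} (f : Fin (m + 1) → EuclideanSpace ℝ (Fin 2)) :
    Set ℝ :=
  {A | ∃ (g : Fin (m + 1) → EuclideanSpace ℝ (Fin 2)) (φ : Fin (m + 1) → ℝ),
    FrameEquiv f g ∧ StrictMono φ ∧ (∀ i, g i = vec2 (φ i)) ∧
      A = φ (Fin.last m) - φ 0 ∧ A < π}



lemma vec2' (t : ℝ) (q : ℤ) :
    (WithLp.equiv 2 (Fin 2 → ℝ)).symm ![Real.cos (t + q * π), Real.sin (t + q * π)]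
      = ((-1 : ℝ) ^ q) • (WithLp.equiv 2 (Fin 2 → ℝ)).symm ![Real.cos t, Real.sin t] := by
  ext j
  fin_cases j <;>
    simp [Real.cos_add_int_mul_pi, Real.sin_add_int_mul_pi]

lemma thetaper (k : ℕ) (θ : ℤ → ℝ) (hper : ∀ n : ℤ, θ (n + k) = θ n + π)
    (n q : ℤ) : θ (n + q * k) = θ n + q * π := by
  induction q using Int.induction_on with
  | zero => simp
  | succ m ih =>
      have := hper (n + m * k)
      push_cast
      push_cast at ih this
      rw [show n + (m+1) * k = n + m*k + k by ring, this, ih]; ring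
  | pred m ih =>
      have := hper (n + (-m - 1) * k)
      push_cast
      push_cast at ih this
      rw [show n + (-m-1)*k + k = n + -m*k by ring] at this
      linarith

lemma modperm_aux (k : ℕ) (hk : 0 < k) (a : ℤ) (j : Fin k) :
    ((a + j) % k).toNat < k := by
  have h1 : (0:ℤ) < k := by exact_mod_cast hk
  have := Int.emod_lt_of_pos (a + j) h1
  have := Int.emod_nonneg (a + j) (by omega : (k:ℤ) ≠ 0)
  omega

/-- addition of an integer mod k as a permutation of Fin k -/
noncomputable def modperm (k : ℕ) (hk : 0 < k) (a : ℤ) : Equiv.Perm (Fin k) where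
  toFun j := ⟨((a + j) % k).toNat, modperm_aux k hk a j⟩
  invFun j := ⟨((-a + j) % k).toNat, modperm_aux k hk (-a) j⟩
  left_inv j := by
    have h1 : (0:ℤ) < k := by exact_mod_cast hk
    have h2 := Int.emod_nonneg (a + j) (by omega : (k:ℤ) ≠ 0)
    apply Fin.ext
    simp only
    have : ((-a + ((a + (j:ℤ)) % k).toNat) % k) = (j:ℤ) % k := by
      rw [Int.toNat_of_nonneg h2, Int.add_emod, Int.emod_emod_of_dvd _ dvd_rfl,
        ← Int.add_emod]
      ring_nf
    rw [this, Int.emod_eq_of_lt (by positivity) (by exact_mod_cast j.2)]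
    simp
  right_inv j := by
    have h1 : (0:ℤ) < k := by exact_mod_cast hk
    have h2 := Int.emod_nonneg (-a + j) (by omega : (k:ℤ) ≠ 0)
    apply Fin.ext
    simp only
    have : ((a + ((-a + (j:ℤ)) % k).toNat) % k) = (j:ℤ) % k := by
      rw [Int.toNat_of_nonneg h2, Int.add_emod, Int.emod_emod_of_dvd _ dvd_rfl,
        ← Int.add_emod]
      ring_nf
    rw [this, Int.emod_eq_of_lt (by positivity) (by exact_mod_cast j.2)]
    simp
/-- Let `f₁, …, f_k` be unit vectors in `ℝ²`, counterclockwise with positive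
consecutive angles and total angle `< π`, encoded by angles `θ : ℤ → ℝ` with
`θ(n+1) > θ(n)` and `θ(n+k) = θ(n) + π` (so that `g_n = vec2 (θ n)` is the
`2k`-periodic sequence `g_n = f_n`, `g_{n+k} = −f_n`). Then for each `i` the
window `{g_i, …, g_{i+k−1}}` is a frame equivalent to `{f₁, …, f_k}`, and its
cross angle `θ(i+k−1) − θ(i)` equals `π` minus the angle between `g_{i+k−1}`
and `g_{i+k}`. -/
theorem window_frameEquiv_and_crossAngle (k : ℕ) (hk : 2 ≤ k) (θ : ℤ → ℝ)
    (hmono : ∀ n : ℤ, θ n < θ (n + 1))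
    (hper : ∀ n : ℤ, θ (n + k) = θ n + π) (i : ℤ) :
    FrameEquiv (fun j : Fin k => vec2 (θ j)) (fun j : Fin k => vec2 (θ (i + j))) ∧
      θ (i + k - 1) - θ i = π - (θ (i + k) - θ (i + k - 1)) := by
  have hk0 : 0 < k := by omega
  constructor
  · refine ⟨LinearIsometryEquiv.refl ℝ _, modperm k hk0 i,
      fun j => (-1 : ℝ) ^ ((i + j) / k), fun j => ?_, fun j => ?_⟩
    · rcases Int.even_or_odd ((i + j) / k) with h | h
      · left; exact Even.neg_one_zpow h
      · right; exact Odd.neg_one_zpow h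
    · have hkz : (k:ℤ) ≠ 0 := by omega
      set n := i + (j:ℤ) with hn
      set q := n / k with hq
      set r := n % k with hr
      have hnr : n = r + q * k := by
        rw [hr, hq, mul_comm]
        exact (Int.emod_add_mul_ediv n k).symm
      have hσ : ((modperm k hk0 i j : Fin k) : ℤ) = r := by
        simp only [modperm, Equiv.coe_fn_mk]
        exact Int.toNat_of_nonneg (Int.emod_nonneg n hkz)
      have key : vec2 (θ n) = (-1:ℝ) ^ q • vec2 (θ r) := by
        rw [hnr, thetaper k θ hper r q, vec2, vec2, vec2']
      simp only [LinearIsometryEquiv.coe_refl, id_eq, hσ]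
      exact key
  · have := hper i
    linarith
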